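/- For real x > 0 with x not an integer and Re assumptions as stated, the Laplace transform of Δ(x) satisfies, for real s > 0: ∫_0^∞ Δ(x) e^{-sx} dx = (1/s) ∑_{n=1}^∞ d(n) e^{-sn} + (log s − γ)/s² − 1/(4s). -/

import Mathlib

open Real MeasureTheory

/-- The error term in the Dirichlet divisor problem. -/
noncomputable def divisorError (x : ℝ) : ℝ :=
  (∑ n ∈ Finset.Icc 1 ⌊x⌋₊, ((n.divisors.card : ℝ)))
    - x * (Real.log x + 2 * Real.eulerMascheroniConstant - 1) - 1 / 4


section Aux
open Set

lemma L1 (s : ℝ) (hs : 0 < s) : ∫ x in Ioi (0:ℝ), Real.exp (-s * x) = 1 / s := by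
  have := Real.integral_rpow_mul_exp_neg_mul_Ioi (a := 1) (r := s) one_pos hs
  simp only [sub_self, Real.rpow_zero, one_mul, Real.rpow_one, Real.Gamma_one, mul_one,
    neg_mul] at this ⊢
  simpa using this

lemma L2 (s : ℝ) (hs : 0 < s) : ∫ x in Ioi (0:ℝ), x * Real.exp (-s * x) = 1 / s ^ 2 := by
  have := Real.integral_rpow_mul_exp_neg_mul_Ioi (a := 2) (r := s) two_pos hs
  rw [Real.Gamma_two, mul_one, show ((2:ℝ)-1) = 1 by norm_num] at this
  simp only [Real.rpow_one] at this
  simp only [neg_mul]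
  rw [this, show (2:ℝ) = ((2:ℕ):ℝ) by norm_num, Real.rpow_natCast, div_pow, one_pow]

lemma Igamma : ∫ t in Ioi (0:ℝ), t * Real.log t * Real.exp (-t)
    = 1 - Real.eulerMascheroniConstant := by
  have h1 := Complex.hasDerivAt_GammaIntegral (s := 2) (by norm_num)
  have hD : (∫ t : ℝ in Ioi 0, (t:ℂ) ^ ((2:ℂ) - 1) * (Real.log t * Real.exp (-t)))
      = ((∫ t in Ioi (0:ℝ), t * Real.log t * Real.exp (-t) : ℝ) : ℂ) := by
    rw [show ((∫ t in Ioi (0:ℝ), t * Real.log t * Real.exp (-t) : ℝ) : ℂ) = ∫ t in Ioi (0:ℝ), ((t * Real.log t * Real.exp (-t) : ℝ) : ℂ) from (integral_ofReal).symm]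
    refine setIntegral_congr_fun measurableSet_Ioi fun t ht => ?_
    push_cast
    rw [show ((2:ℂ) - 1) = 1 by norm_num, Complex.cpow_one]
    ring
  rw [hD] at h1
  have h2 : HasDerivAt (fun y : ℝ => Complex.GammaIntegral ↑y)
      ((∫ t in Ioi (0:ℝ), t * Real.log t * Real.exp (-t) : ℝ) : ℂ) 2 := by
    have := h1.comp_ofReal (z := 2)
    simpa using this
  have h3 : HasDerivAt (fun y : ℝ => ((Real.Gamma y : ℂ)))
      ((∫ t in Ioi (0:ℝ), t * Real.log t * Real.exp (-t) : ℝ) : ℂ) 2 := by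
    refine h2.congr_of_eventuallyEq ?_
    filter_upwards [eventually_gt_nhds (show (0:ℝ) < 2 by norm_num)] with y hy
    rw [← Complex.Gamma_ofReal, Complex.Gamma_eq_integral (by simpa using hy)]
  have h4 : HasDerivAt Real.Gamma (1 - Real.eulerMascheroniConstant) 2 := by
    have := Real.hasDerivAt_Gamma_nat 1
    norm_num [harmonic_succ] at this ⊢
    convert this using 1
    ring
  have h5 := h4.ofReal_comp
  have := h3.unique h5
  exact_mod_cast this

lemma intPow (k : ℕ) {s : ℝ} (hs : 0 < s) :
    IntegrableOn (fun x => x ^ k * Real.exp (-s * x)) (Ioi (0:ℝ)) := by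
  have hg : IntegrableOn (fun t : ℝ => Real.exp (-t) * t ^ k) (Ioi (0:ℝ)) := by
    have := Real.GammaIntegral_convergent (s := (k:ℝ) + 1) (by positivity)
    simpa [add_sub_cancel_right, Real.rpow_natCast] using this
  have h2 : IntegrableOn (fun x : ℝ => Real.exp (-(s * x)) * (s * x) ^ k) (Ioi (0:ℝ)) := by
    refine (integrableOn_Ioi_comp_mul_left_iff (fun t : ℝ => Real.exp (-t) * t ^ k) 0 hs).mpr ?_
    simpa using hg
  have h3 := h2.const_mul ((s : ℝ) ^ k)⁻¹
  refine (integrableOn_congr_fun (fun x hx => ?_) measurableSet_Ioi).mpr h3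
  rw [mul_pow, neg_mul]
  field_simp

lemma intXLog {s : ℝ} (hs : 0 < s) :
    IntegrableOn (fun x => x * Real.log x * Real.exp (-s * x)) (Ioi (0:ℝ)) := by
  have hmeas : AEStronglyMeasurable (fun x => x * Real.log x * Real.exp (-s * x))
      (volume.restrict (Ioi (0:ℝ))) := by
    refine ContinuousOn.aestronglyMeasurable ?_ measurableSet_Ioi
    exact ((continuousOn_id.mul (Real.continuousOn_log.mono (fun x hx => ne_of_gt hx))).mul
      (Real.continuous_exp.comp (continuous_const.mul continuous_id)).continuousOn)
  have hg : IntegrableOn (fun x : ℝ => x ^ 2 * Real.exp (-s * x) + Real.exp (-s * x))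
      (Ioi (0:ℝ)) := by
    have := (intPow 2 hs).add (by simpa using intPow 0 hs)
    simpa [Pi.add_def] using this
  refine Integrable.mono' hg hmeas ?_
  filter_upwards [ae_restrict_mem measurableSet_Ioi] with x hx
  have hx0 : (0:ℝ) < x := hx
  have hexp : (0:ℝ) < Real.exp (-s * x) := Real.exp_pos _
  rw [Real.norm_eq_abs, abs_mul, abs_mul, abs_of_pos hx0, abs_of_pos hexp]
  have hb : x * |Real.log x| ≤ x ^ 2 + 1 := by
    rcases le_or_gt x 1 with h1 | h1
    · have : |Real.log x| = -Real.log x := abs_of_nonpos (Real.log_nonpos hx0.le h1)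
      rw [this, ← Real.log_inv]
      have := Real.log_le_sub_one_of_pos (inv_pos.mpr hx0)
      nlinarith [Real.log_le_sub_one_of_pos (inv_pos.mpr hx0), sq_nonneg x,
        mul_inv_cancel₀ hx0.ne']
    · have hl : |Real.log x| = Real.log x := abs_of_nonneg (Real.log_nonneg h1.le)
      have := Real.log_le_sub_one_of_pos hx0
      nlinarith
  nlinarith

lemma L3 (s : ℝ) (hs : 0 < s) : ∫ x in Ioi (0:ℝ), x * Real.log x * Real.exp (-s * x)
    = (1 - Real.eulerMascheroniConstant - Real.log s) / s ^ 2 := by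
  set g : ℝ → ℝ := fun t => t / s * Real.log (t / s) * Real.exp (-t) with hg
  have key : ∀ x : ℝ, g (s * x) = x * Real.log x * Real.exp (-s * x) := by
    intro x
    simp only [hg, mul_div_cancel_left₀ _ hs.ne', neg_mul]
  have h1 : ∫ x in Ioi (0:ℝ), x * Real.log x * Real.exp (-s * x)
      = s⁻¹ • ∫ t in Ioi (0:ℝ), g t := by
    have := integral_comp_mul_left_Ioi g 0 hs
    rw [mul_zero] at this
    rw [← this]
    simp only [key]
  have h2 : ∫ t in Ioi (0:ℝ), g t
      = ∫ t in Ioi (0:ℝ), (s⁻¹ * (t * Real.log t * Real.exp (-t))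
          - Real.log s * s⁻¹ * (t * Real.exp (-t))) := by
    refine setIntegral_congr_fun measurableSet_Ioi fun t ht => ?_
    have ht0 : (0:ℝ) < t := ht
    simp only [hg]
    rw [Real.log_div ht0.ne' hs.ne']
    field_simp
  have hi1 : IntegrableOn (fun t : ℝ => t * Real.log t * Real.exp (-t)) (Ioi (0:ℝ)) := by
    simpa [neg_mul] using intXLog (s := 1) one_pos
  have hi2 : IntegrableOn (fun t : ℝ => t * Real.exp (-t)) (Ioi (0:ℝ)) := by
    simpa [neg_mul] using intPow 1 (s := 1) one_pos
  have hv1 : ∫ t in Ioi (0:ℝ), t * Real.exp (-t) = 1 := by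
    have := L2 1 one_pos
    simpa using this
  rw [h1, h2, integral_sub ((hi1.const_mul _)) ((hi2.const_mul _)),
    MeasureTheory.integral_const_mul, MeasureTheory.integral_const_mul, Igamma, hv1, smul_eq_mul]
  field_simp

lemma expIoi (c : ℝ) {s : ℝ} (hs : 0 < s) :
    ∫ x in Ioi c, Real.exp (-s * x) = Real.exp (-s * c) / s := by
  have := integral_comp_mul_left_Ioi (fun t => Real.exp (-t)) c hs
  simp only [neg_mul] at this ⊢
  rw [this, integral_exp_neg_Ioi, smul_eq_mul]
  rw [div_eq_inv_mul]

lemma dle (n : ℕ) : (n.divisors.card : ℝ) ≤ n := by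
  have : n.divisors.card ≤ n := by
    rw [Nat.divisors]
    exact (Finset.card_filter_le _ _).trans (by simp)
  exact_mod_cast this

noncomputable def Afun (x : ℝ) : ℝ := ∑ n ∈ Finset.Icc 1 ⌊x⌋₊, ((n.divisors.card : ℝ))

lemma Afun_nonneg (x : ℝ) : 0 ≤ Afun x :=
  Finset.sum_nonneg fun n _ => by positivity

lemma Afun_le {x : ℝ} (hx : 0 ≤ x) : Afun x ≤ x ^ 2 := by
  have h1 : Afun x ≤ ∑ n ∈ Finset.Icc 1 ⌊x⌋₊, (x : ℝ) := by
    refine Finset.sum_le_sum fun n hn => ?_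
    refine (dle n).trans ?_
    have hn' : n ≤ ⌊x⌋₊ := (Finset.mem_Icc.mp hn).2
    calc (n:ℝ) ≤ (⌊x⌋₊ : ℝ) := by exact_mod_cast hn'
      _ ≤ x := Nat.floor_le hx
  calc Afun x ≤ ∑ _n ∈ Finset.Icc 1 ⌊x⌋₊, (x : ℝ) := h1
    _ = (⌊x⌋₊ : ℝ) * x := by
        rw [Finset.sum_const, Nat.card_Icc]
        simp [nsmul_eq_mul]
    _ ≤ x * x := by
        have := Nat.floor_le hx
        nlinarith
    _ = x ^ 2 := (sq x).symm

lemma Afun_measurable : Measurable Afun := by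
  have : Afun = (fun k : ℕ => ∑ n ∈ Finset.Icc 1 k, ((n.divisors.card : ℝ))) ∘ Nat.floor := rfl
  rw [this]
  exact measurable_from_top.comp Nat.measurable_floor

lemma intA {s : ℝ} (hs : 0 < s) :
    IntegrableOn (fun x => Afun x * Real.exp (-s * x)) (Ioi (0:ℝ)) := by
  have hmeas : AEStronglyMeasurable (fun x => Afun x * Real.exp (-s * x))
      (volume.restrict (Ioi (0:ℝ))) :=
    ((Afun_measurable.mul ((Real.continuous_exp.comp
      (continuous_const.mul continuous_id)).measurable))).aestronglyMeasurable
  refine Integrable.mono' (intPow 2 hs) hmeas ?_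
  filter_upwards [ae_restrict_mem measurableSet_Ioi] with x hx
  have hx0 : (0:ℝ) < x := hx
  rw [Real.norm_eq_abs, abs_mul, abs_of_nonneg (Afun_nonneg x),
    abs_of_pos (Real.exp_pos _)]
  exact mul_le_mul_of_nonneg_right (Afun_le hx0.le) (Real.exp_pos _).le

lemma L4 (s : ℝ) (hs : 0 < s) :
    ∫ x in Ioi (0:ℝ), Afun x * Real.exp (-s * x)
      = (1 / s) * (∑' n : ℕ+, ((n : ℕ).divisors.card : ℝ) * Real.exp (-s * n)) := by
  set F : ℕ → ℝ → ℝ := fun n => Set.indicator (Ici (n:ℝ))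
    (fun x => ((n.divisors.card : ℝ)) * Real.exp (-s * x)) with hF
  have hInt : ∀ n : ℕ, Integrable (F n) (volume.restrict (Ioi (0:ℝ))) := by
    intro n
    exact (((exp_neg_integrableOn_Ioi 0 hs).const_mul _)).indicator measurableSet_Ici
  have hFnonneg : ∀ n x, 0 ≤ F n x := by
    intro n x
    refine Set.indicator_nonneg (fun y _ => ?_) x
    positivity
  have hval : ∀ n : ℕ, ∫ x in Ioi (0:ℝ), F n x
      = ((n.divisors.card : ℝ)) * Real.exp (-s * n) / s := by
    intro n
    rcases Nat.eq_zero_or_pos n with rfl | hn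
    · simp [hF, Nat.divisors_zero]
    · have h1 : Ici ((n:ℝ)) ∩ Ioi (0:ℝ) = Ici ((n:ℝ)) := by
        refine Set.inter_eq_left.mpr fun y hy => ?_
        have : (1:ℝ) ≤ (n:ℝ) := by exact_mod_cast hn
        exact lt_of_lt_of_le (by linarith : (0:ℝ) < n) hy
      rw [hF, MeasureTheory.integral_indicator measurableSet_Ici,
        Measure.restrict_restrict measurableSet_Ici, h1,
        MeasureTheory.integral_Ici_eq_integral_Ioi, MeasureTheory.integral_const_mul,
        expIoi _ hs, mul_div_assoc]
  have hnorm : ∀ n : ℕ, (∫ x in Ioi (0:ℝ), ‖F n x‖)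
      = ((n.divisors.card : ℝ)) * Real.exp (-s * n) / s := by
    intro n
    rw [← hval n]
    exact integral_congr_ae (Filter.Eventually.of_forall fun x =>
      Real.norm_of_nonneg (hFnonneg n x))
  have hsum : Summable fun n : ℕ => ((n.divisors.card : ℝ)) * Real.exp (-s * n) / s := by
    have h1 : Summable fun n : ℕ => ((n:ℝ) ^ 1 * Real.exp (-s * n)) / s :=
      (Real.summable_pow_mul_exp_neg_nat_mul 1 hs).div_const s
    refine Summable.of_nonneg_of_le (fun n => by positivity) (fun n => ?_) h1
    have := dle n
    have h2 : (0:ℝ) < Real.exp (-s * n) := Real.exp_pos _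
    rw [pow_one]
    gcongr
  have hswap : ∑' n : ℕ, (∫ x in Ioi (0:ℝ), F n x)
      = ∫ x in Ioi (0:ℝ), ∑' n : ℕ, F n x := by
    refine MeasureTheory.integral_tsum_of_summable_integral_norm hInt ?_
    simpa only [hnorm] using hsum
  have hpt : ∀ x ∈ Ioi (0:ℝ), (∑' n : ℕ, F n x) = Afun x * Real.exp (-s * x) := by
    intro x hx
    have hx0 : (0:ℝ) < x := hx
    have h0 : ∀ n ∉ Finset.Icc 1 ⌊x⌋₊, F n x = 0 := by
      intro n hn
      rw [Finset.mem_Icc, not_and_or] at hn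
      rcases hn with hn | hn
      · have : n = 0 := by omega
        subst this
        simp [hF, Nat.divisors_zero]
      · push_neg at hn
        have hxn : x < (n:ℝ) := by
          have h1 : x < (⌊x⌋₊ : ℝ) + 1 := Nat.lt_floor_add_one x
          have h2 : (⌊x⌋₊ : ℝ) + 1 ≤ (n:ℝ) := by exact_mod_cast hn
          linarith
        exact Set.indicator_of_notMem (by simpa using hxn) _
    rw [tsum_eq_sum h0, Afun, Finset.sum_mul]
    refine Finset.sum_congr rfl fun n hn => ?_
    have hn' : (n:ℝ) ≤ x := by
      have := (Finset.mem_Icc.mp hn).2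
      calc (n:ℝ) ≤ (⌊x⌋₊:ℝ) := by exact_mod_cast this
        _ ≤ x := Nat.floor_le hx0.le
    exact Set.indicator_of_mem hn' _
  have hNsum : ∑' n : ℕ, ((n.divisors.card : ℝ)) * Real.exp (-s * n)
      = ∑' n : ℕ+, (((n:ℕ).divisors.card : ℝ)) * Real.exp (-s * n) := by
    refine (Function.Injective.tsum_eq (fun a b h => PNat.coe_injective h) ?_).symm
    intro n hn
    rcases Nat.eq_zero_or_pos n with rfl | hpos
    · simp [Nat.divisors_zero] at hn
    · exact ⟨⟨n, hpos⟩, rfl⟩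
  calc ∫ x in Ioi (0:ℝ), Afun x * Real.exp (-s * x)
      = ∫ x in Ioi (0:ℝ), ∑' n : ℕ, F n x :=
        (setIntegral_congr_fun measurableSet_Ioi hpt).symm
    _ = ∑' n : ℕ, (∫ x in Ioi (0:ℝ), F n x) := hswap.symm
    _ = ∑' n : ℕ, ((n.divisors.card : ℝ)) * Real.exp (-s * n) / s := by
        simp only [hval]
    _ = (∑' n : ℕ, ((n.divisors.card : ℝ)) * Real.exp (-s * n)) / s := by
        rw [tsum_div_const]
    _ = (1 / s) * (∑' n : ℕ+, (((n:ℕ).divisors.card : ℝ)) * Real.exp (-s * n)) := by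
        rw [hNsum, one_div, div_eq_inv_mul]

/-- The Laplace transform of `Δ(x)`:
`∫_0^∞ Δ(x) e^{-sx} dx = (1/s) ∑_{n≥1} d(n) e^{-sn} + (log s − γ)/s² − 1/(4s)`. -/
theorem laplace_divisorError (s : ℝ) (hs : 0 < s) :
    ∫ x in Set.Ioi (0 : ℝ), divisorError x * Real.exp (-s * x)
      = (1 / s) * (∑' n : ℕ+, ((n : ℕ).divisors.card : ℝ) * Real.exp (-s * n))
        + (Real.log s - Real.eulerMascheroniConstant) / s ^ 2 - 1 / (4 * s) := by
  have hEq : ∀ x : ℝ, divisorError x * Real.exp (-s * x)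
      = Afun x * Real.exp (-s * x) - x * Real.log x * Real.exp (-s * x)
        - (2 * Real.eulerMascheroniConstant - 1) * (x * Real.exp (-s * x))
        - (1 / 4) * Real.exp (-s * x) := by
    intro x
    simp only [divisorError, Afun]
    ring
  simp only [hEq]
  have i1 := intA hs
  have i2 := intXLog hs
  have i3 := (intPow 1 hs).const_mul (2 * Real.eulerMascheroniConstant - 1)
  have i4 := (exp_neg_integrableOn_Ioi 0 hs).const_mul (1/4 : ℝ)
  simp only [pow_one] at i3
  have i12 : IntegrableOn (fun x => Afun x * Real.exp (-s * x)
      - x * Real.log x * Real.exp (-s * x)) (Ioi (0:ℝ)) := i1.sub i2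
  have i123 : IntegrableOn (fun x => Afun x * Real.exp (-s * x)
      - x * Real.log x * Real.exp (-s * x)
      - (2 * Real.eulerMascheroniConstant - 1) * (x * Real.exp (-s * x))) (Ioi (0:ℝ)) :=
    i12.sub i3
  rw [integral_sub i123 i4, integral_sub i12 i3, integral_sub i1 i2,
    L4 s hs, L3 s hs, MeasureTheory.integral_const_mul,
    MeasureTheory.integral_const_mul, L2 s hs, L1 s hs]
  field_simp
  ring

end Aux
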